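/- Let μ be the triadic doubling measure on [0,1] defined by μ([0,1]) = 1 and, for each triadic subinterval I, μ(I) = δ μ(πI) if I is the middle child of its triadic parent πI, and μ(I) = ((1−δ)/2) μ(πI) if I shares an endpoint with πI, where 0 < δ < 1/3. Then for α with 1 − ln(2/(1−δ))/ln 3 < α < 1, the restriction μ_I satisfies ‖I_α μ_I‖_{L^∞(I)} ≤ C_{α,δ} μ(I) |I|^{α−1} for every triadic interval I, with C_{α,δ} independent of I. -/

import Mathlib

open MeasureTheory ENNReal

/-- The triadic interval `[j/3^k, (j+1)/3^k)` of generation `k`. -/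
def triSet (k j : ℕ) : Set ℝ := Set.Ico ((j : ℝ) / 3 ^ k) (((j : ℝ) + 1) / 3 ^ k)

/-- `μ` is the triadic measure with parameter `δ`: `μ([0,1]) = 1`, the middle triadic child
gets fraction `δ` of the mass of its parent, and each outer child gets `(1-δ)/2`. -/
def IsTriadicMeasure (μ : Measure ℝ) (δ : ℝ) : Prop :=
  μ (triSet 0 0) = 1 ∧
  ∀ k j : ℕ, j < 3 ^ k →
    μ (triSet (k + 1) (3 * j)) = ENNReal.ofReal ((1 - δ) / 2) * μ (triSet k j) ∧
    μ (triSet (k + 1) (3 * j + 1)) = ENNReal.ofReal δ * μ (triSet k j) ∧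
    μ (triSet (k + 1) (3 * j + 2)) = ENNReal.ofReal ((1 - δ) / 2) * μ (triSet k j)

/-- The fractional integral `I_α ν(x) = ∫ |x-y|^{α-1} dν(y)` of a measure on `ℝ`. -/
noncomputable def fracInt (α : ℝ) (ν : Measure ℝ) (x : ℝ) : ℝ≥0∞ :=
  ∫⁻ y, ENNReal.ofReal (|x - y| ^ (α - 1)) ∂ν

lemma tri_pow_pos (k : ℕ) : (0:ℝ) < 3 ^ k := by positivity

lemma mem_triSet_iff {k j : ℕ} {x : ℝ} :
    x ∈ triSet k j ↔ (j:ℝ) ≤ x * 3 ^ k ∧ x * 3 ^ k < (j:ℝ) + 1 := by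
  have hp := tri_pow_pos k
  rw [triSet, Set.mem_Ico, div_le_iff₀ hp, lt_div_iff₀ hp]

lemma triSet_child_subset (k a : ℕ) : triSet (k+1) a ⊆ triSet k (a / 3) := by
  intro x hx
  rw [mem_triSet_iff] at hx ⊢
  obtain ⟨h1, h2⟩ := hx
  have h3 : x * (3:ℝ)^(k+1) = x * 3^k * 3 := by ring
  rw [h3] at h1 h2
  have hq : ((a/3 : ℕ):ℝ) * 3 ≤ (a:ℝ) := by exact_mod_cast Nat.div_mul_le_self a 3
  have hq2 : (a:ℝ) + 1 ≤ ((a/3 : ℕ):ℝ) * 3 + 3 := by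
    have : a + 1 ≤ (a/3) * 3 + 3 := by omega
    exact_mod_cast this
  constructor <;> linarith

lemma triSet_disjoint {k : ℕ} {j j' : ℕ} (h : j ≠ j') :
    Disjoint (triSet k j) (triSet k j') := by
  rw [Set.disjoint_left]
  intro x hx hx'
  rw [mem_triSet_iff] at hx hx'
  have h1 : (j:ℝ) < (j':ℝ) + 1 := by linarith [hx.1, hx'.2]
  have h2 : (j':ℝ) < (j:ℝ) + 1 := by linarith [hx'.1, hx.2]
  have h1' : j < j' + 1 := by exact_mod_cast h1
  have h2' : j' < j + 1 := by exact_mod_cast h2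
  omega

lemma triSet_nonempty (k j : ℕ) : (triSet k j).Nonempty := by
  refine ⟨(j:ℝ)/3^k, ?_⟩
  rw [mem_triSet_iff]
  have hp := tri_pow_pos k
  rw [div_mul_cancel₀ _ (ne_of_gt hp)]
  exact ⟨le_refl _, by linarith⟩

/-- A triadic interval of deeper generation is contained in or disjoint from a shallower one. -/
lemma triSet_subset_or_disjoint (d k j a : ℕ) :
    triSet (k+d) a ⊆ triSet k j ∨ Disjoint (triSet k j) (triSet (k+d) a) := by
  induction d generalizing a with
  | zero =>
    rcases eq_or_ne a j with rfl | h
    · exact Or.inl subset_rfl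
    · exact Or.inr (triSet_disjoint (Ne.symm h))
  | succ d ih =>
    have hsub : triSet (k+d+1) a ⊆ triSet (k+d) (a/3) := triSet_child_subset (k+d) a
    rcases ih (a/3) with h | h
    · exact Or.inl (hsub.trans h)
    · exact Or.inr (h.mono_right hsub)

section Mass
variable {μ : Measure ℝ} {δ : ℝ}

lemma child_mass (hμ : IsTriadicMeasure μ δ) (hδ0 : 0 < δ) (hδ : δ < 1/3)
    {k a : ℕ} (ha : a < 3^(k+1)) :
    μ (triSet (k+1) a) ≤ ENNReal.ofReal ((1-δ)/2) * μ (triSet k (a/3)) := by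
  have hq : a / 3 < 3 ^ k := by
    have : 3^(k+1) = 3 * 3^k := by ring
    omega
  obtain ⟨h0, h1, h2⟩ := hμ.2 k (a/3) hq
  have hδr : δ ≤ (1-δ)/2 := by linarith
  have hmod : a % 3 = 0 ∨ a % 3 = 1 ∨ a % 3 = 2 := by omega
  rcases hmod with hm | hm | hm
  · have : a = 3 * (a/3) := by omega
    conv_lhs => rw [this]
    exact le_of_eq h0
  · have : a = 3 * (a/3) + 1 := by omega
    conv_lhs => rw [this]
    rw [h1]
    exact mul_le_mul_left (ENNReal.ofReal_le_ofReal hδr) _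
  · have : a = 3 * (a/3) + 2 := by omega
    conv_lhs => rw [this]
    exact le_of_eq h2

end Mass

lemma triSet_lt_pow {k a : ℕ} {x : ℝ} (hx : x ∈ triSet k a) (hx1 : x < 1) : a < 3 ^ k := by
  rw [mem_triSet_iff] at hx
  have hp := tri_pow_pos k
  have : (a:ℝ) < 3^k := by
    calc (a:ℝ) ≤ x * 3^k := hx.1
    _ < 1 * 3^k := by nlinarith
    _ = 3^k := one_mul _
  exact_mod_cast this

section Mass2
variable {μ : Measure ℝ} {δ : ℝ}


lemma inter_mass (hμ : IsTriadicMeasure μ δ) (hδ0 : 0 < δ) (hδ : δ < 1/3)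
    (d k j : ℕ) (hj : j < 3^k) (a : ℕ) :
    μ (triSet k j ∩ triSet (k+d) a) ≤ ENNReal.ofReal (((1-δ)/2)^d) * μ (triSet k j) := by
  have hr0 : (0:ℝ) ≤ (1-δ)/2 := by linarith
  induction d generalizing a with
  | zero =>
    simp only [Nat.add_zero]
    rcases eq_or_ne a j with rfl | h
    · simp [Set.inter_self]
    · rw [(triSet_disjoint (Ne.symm h)).inter_eq]
      simp
  | succ d ih =>
    rcases triSet_subset_or_disjoint (d+1) k j a with hsub | hdis
    · rw [Set.inter_eq_self_of_subset_right hsub]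
      -- a < 3^(k+d+1)
      obtain ⟨x₀, hx₀⟩ := triSet_nonempty (k+(d+1)) a
      have hx₀I : x₀ ∈ triSet k j := hsub hx₀
      have hx₀1 : x₀ < 1 := by
        rw [mem_triSet_iff] at hx₀I
        have hp := tri_pow_pos k
        have hj' : (j:ℝ) + 1 ≤ 3^k := by exact_mod_cast hj
        nlinarith [hx₀I.2]
      have ha : a < 3^(k+d+1) := triSet_lt_pow hx₀ hx₀1
      have h1 : μ (triSet (k+d+1) a) ≤ ENNReal.ofReal ((1-δ)/2) * μ (triSet (k+d) (a/3)) :=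
        child_mass hμ hδ0 hδ ha
      -- parent is inside I
      have hP : triSet (k+d) (a/3) ⊆ triSet k j := by
        rcases triSet_subset_or_disjoint d k j (a/3) with h | h
        · exact h
        · exfalso
          exact (h.ne_of_mem hx₀I (triSet_child_subset (k+d) a hx₀)) rfl
      have h2 : μ (triSet (k+d) (a/3)) = μ (triSet k j ∩ triSet (k+d) (a/3)) := by
        rw [Set.inter_eq_self_of_subset_right hP]
      calc μ (triSet (k+(d+1)) a) ≤ ENNReal.ofReal ((1-δ)/2) * μ (triSet (k+d) (a/3)) := h1
      _ = ENNReal.ofReal ((1-δ)/2) * μ (triSet k j ∩ triSet (k+d) (a/3)) := by rw [h2]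
      _ ≤ ENNReal.ofReal ((1-δ)/2) * (ENNReal.ofReal (((1-δ)/2)^d) * μ (triSet k j)) :=
        mul_le_mul_right (ih (a/3)) _
      _ = ENNReal.ofReal (((1-δ)/2)^(d+1)) * μ (triSet k j) := by
        rw [← mul_assoc, ← ENNReal.ofReal_mul hr0, ← pow_succ']
    · rw [hdis.inter_eq]
      simp

end Mass2

lemma ball_subset_three (m : ℕ) (x : ℝ) (hx : 0 ≤ x) :
    {y : ℝ | 0 ≤ y ∧ |x - y| < ((3:ℝ)^m)⁻¹} ⊆
      triSet m (⌊x*3^m⌋₊ - 1) ∪ triSet m ⌊x*3^m⌋₊ ∪ triSet m (⌊x*3^m⌋₊ + 1) := by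
  intro y hy
  obtain ⟨hy0, hxy⟩ := hy
  have hp := tri_pow_pos m
  set b := ⌊x*3^m⌋₊ with hb
  set c := ⌊y*3^m⌋₊ with hc
  have hyb : 0 ≤ y * 3^m := by positivity
  have hxb : 0 ≤ x * 3^m := by positivity
  have hc1 : (c:ℝ) ≤ y * 3^m := Nat.floor_le hyb
  have hc2 : y * 3^m < (c:ℝ) + 1 := Nat.lt_floor_add_one _
  have hb1 : (b:ℝ) ≤ x * 3^m := Nat.floor_le hxb
  have hb2 : x * 3^m < (b:ℝ) + 1 := Nat.lt_floor_add_one _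
  have hyc : y ∈ triSet m c := mem_triSet_iff.mpr ⟨hc1, hc2⟩
  have hdist : |x * 3^m - y * 3^m| < 1 := by
    rw [← sub_mul, abs_mul, abs_of_pos hp]
    calc |x - y| * 3^m < ((3:ℝ)^m)⁻¹ * 3^m := by nlinarith [abs_nonneg (x - y)]
    _ = 1 := inv_mul_cancel₀ (ne_of_gt hp)
  rw [abs_lt] at hdist
  have hbc : b ≤ c + 1 := by
    have hr : (b:ℝ) < (c:ℝ) + 2 := by linarith
    have h' : b < c + 2 := by exact_mod_cast hr
    omega
  have hcb : c ≤ b + 1 := by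
    have hr : (c:ℝ) < (b:ℝ) + 2 := by linarith
    have h' : c < b + 2 := by exact_mod_cast hr
    omega
  have : c = b - 1 ∨ c = b ∨ c = b + 1 := by omega
  rcases this with h | h | h
  · exact Or.inl (Or.inl (h ▸ hyc))
  · exact Or.inl (Or.inr (h ▸ hyc))
  · exact Or.inr (h ▸ hyc)

lemma ball_mass {μ : Measure ℝ} {δ : ℝ} (hμ : IsTriadicMeasure μ δ) (hδ0 : 0 < δ)
    (hδ : δ < 1/3) (d k j : ℕ) (hj : j < 3^k) (x : ℝ) (hx : 0 ≤ x) :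
    μ (triSet k j ∩ {y | |x - y| < ((3:ℝ)^(k+d))⁻¹}) ≤
      ENNReal.ofReal (3 * ((1-δ)/2)^d) * μ (triSet k j) := by
  set m := k + d with hm
  set b := ⌊x*3^m⌋₊ with hb
  have hsub : triSet k j ∩ {y | |x - y| < ((3:ℝ)^m)⁻¹} ⊆
      (triSet k j ∩ triSet m (b-1)) ∪ (triSet k j ∩ triSet m b) ∪ (triSet k j ∩ triSet m (b+1)) := by
    rintro y ⟨hyI, hyB⟩
    have hy0 : 0 ≤ y := by
      have h0 : (0:ℝ) ≤ (j:ℝ)/3^k := by positivity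
      have h1 := hyI.1
      linarith
    rcases ball_subset_three m x hx ⟨hy0, hyB⟩ with (h | h) | h
    · exact Or.inl (Or.inl ⟨hyI, h⟩)
    · exact Or.inl (Or.inr ⟨hyI, h⟩)
    · exact Or.inr ⟨hyI, h⟩
  have hr0 : (0:ℝ) ≤ ((1-δ)/2)^d := pow_nonneg (by linarith) d
  calc μ (triSet k j ∩ {y | |x - y| < ((3:ℝ)^m)⁻¹})
      ≤ μ ((triSet k j ∩ triSet m (b-1)) ∪ (triSet k j ∩ triSet m b) ∪ (triSet k j ∩ triSet m (b+1))) :=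
        measure_mono hsub
    _ ≤ μ (triSet k j ∩ triSet m (b-1)) + μ (triSet k j ∩ triSet m b) + μ (triSet k j ∩ triSet m (b+1)) :=
        le_trans (measure_union_le _ _) (add_le_add_left (measure_union_le _ _) _)
    _ ≤ ENNReal.ofReal (((1-δ)/2)^d) * μ (triSet k j) + ENNReal.ofReal (((1-δ)/2)^d) * μ (triSet k j)
        + ENNReal.ofReal (((1-δ)/2)^d) * μ (triSet k j) := by
        gcongr <;> exact inter_mass hμ hδ0 hδ d k j hj _
    _ = ENNReal.ofReal (3 * ((1-δ)/2)^d) * μ (triSet k j) := by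
        have h3 : (3:ℝ) * ((1-δ)/2)^d = ((1-δ)/2)^d + ((1-δ)/2)^d + ((1-δ)/2)^d := by ring
        rw [h3, ENNReal.ofReal_add (add_nonneg hr0 hr0) hr0, ENNReal.ofReal_add hr0 hr0,
          add_mul, add_mul]

lemma pointwise_bound {α : ℝ} (hα2 : α < 1) (k : ℕ) (x y : ℝ)
    (hxy : |x - y| < ((3:ℝ)^k)⁻¹) :
    ENNReal.ofReal (|x - y| ^ (α - 1)) ≤
      ∑' d : ℕ, Set.indicator {y' : ℝ | |x - y'| < ((3:ℝ)^(k+d))⁻¹}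
        (fun _ => ENNReal.ofReal ((((3:ℝ)^(k+d+1))⁻¹) ^ (α-1))) y := by
  rcases eq_or_ne (x - y) 0 with h0 | h0
  · rw [h0, abs_zero, Real.zero_rpow (by linarith : α - 1 ≠ 0), ENNReal.ofReal_zero]
    exact zero_le
  · have he0 : 0 < |x - y| := abs_pos.mpr h0
    have hex : ∃ d : ℕ, ((3:ℝ)^(k+d+1))⁻¹ ≤ |x - y| := by
      obtain ⟨n, hn⟩ := pow_unbounded_of_one_lt |x - y|⁻¹ (by norm_num : (1:ℝ) < 3)
      refine ⟨n, ?_⟩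
      have h1 : |x - y|⁻¹ < 3^(k+n+1) :=
        lt_of_lt_of_le hn (pow_le_pow_right₀ (by norm_num) (by omega))
      have := inv_strictAnti₀ (inv_pos.mpr he0) h1
      rw [inv_inv] at this
      exact this.le
    classical
    obtain ⟨D, hPD, hmin⟩ : ∃ D : ℕ, ((3:ℝ)^(k+D+1))⁻¹ ≤ |x - y| ∧
        ∀ m < D, ¬(((3:ℝ)^(k+m+1))⁻¹ ≤ |x - y|) :=
      ⟨Nat.find hex, Nat.find_spec hex, fun m hm => Nat.find_min hex hm⟩
    have hupper : |x - y| < ((3:ℝ)^(k+D))⁻¹ := by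
      rcases Nat.eq_zero_or_pos D with h | h
      · rw [h]; simpa using hxy
      · obtain ⟨D', rfl⟩ : ∃ D', D = D' + 1 := ⟨D - 1, by omega⟩
        have := hmin D' (by omega)
        push_neg at this
        simpa [Nat.add_assoc] using this
    have hle : |x - y| ^ (α - 1) ≤ (((3:ℝ)^(k+D+1))⁻¹) ^ (α - 1) :=
      Real.rpow_le_rpow_of_nonpos (by positivity) hPD (by linarith)
    calc ENNReal.ofReal (|x - y| ^ (α - 1))
        ≤ ENNReal.ofReal ((((3:ℝ)^(k+D+1))⁻¹) ^ (α - 1)) := ENNReal.ofReal_le_ofReal hle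
      _ = Set.indicator {y' : ℝ | |x - y'| < ((3:ℝ)^(k+D))⁻¹}
          (fun _ => ENNReal.ofReal ((((3:ℝ)^(k+D+1))⁻¹) ^ (α-1))) y := by
          rw [Set.indicator_of_mem]
          exact hupper
      _ ≤ _ := ENNReal.le_tsum D

lemma pow_rpow_comm (t : ℝ) (ht : 0 ≤ t) (n : ℕ) (s : ℝ) : (t^n)^s = (t^s)^n := by
  rw [← Real.rpow_natCast t n, ← Real.rpow_mul ht, mul_comm, Real.rpow_mul ht,
    Real.rpow_natCast]

/-- For the triadic doubling measure `μ` with parameter `0 < δ < 1/3` and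
`1 - ln(2/(1-δ))/ln 3 < α < 1`, one has `‖I_α μ_I‖_{L^∞(I)} ≤ C_{α,δ} μ(I) |I|^{α-1}` for
every triadic interval `I`, with `C_{α,δ}` independent of `I`. -/
theorem stmt_16 (μ : Measure ℝ) (δ : ℝ) (hδ0 : 0 < δ) (hδ : δ < 1 / 3)
    (hμ : IsTriadicMeasure μ δ) (α : ℝ)
    (hα1 : 1 - Real.log (2 / (1 - δ)) / Real.log 3 < α) (hα2 : α < 1) :
    ∃ C > (0:ℝ), ∀ k j : ℕ, j < 3 ^ k → ∀ x ∈ triSet k j,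
      fracInt α (μ.restrict (triSet k j)) x ≤
        ENNReal.ofReal (C * (((3 : ℝ) ^ k)⁻¹) ^ (α - 1)) * μ (triSet k j) := by
  have h1δ : (0:ℝ) < 1 - δ := by linarith
  have hr0 : (0:ℝ) < (1-δ)/2 := by linarith
  set r : ℝ := (1-δ)/2 with hrdef
  set u : ℝ := ((3:ℝ)⁻¹) ^ (α - 1) with hudef
  have hu0 : 0 < u := Real.rpow_pos_of_pos (by norm_num) _
  set q : ℝ := u * r with hqdef
  have hq0 : (0:ℝ) ≤ q := mul_nonneg hu0.le hr0.le
  -- q < 1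
  have hq1 : q < 1 := by
    have h2d : (0:ℝ) < 2/(1-δ) := by positivity
    have hlog3 : 0 < Real.log 3 := Real.log_pos (by norm_num)
    have hkey : (1-α) * Real.log 3 < Real.log (2/(1-δ)) := by
      have h := (lt_div_iff₀ hlog3).mp (by linarith : 1 - α < Real.log (2/(1-δ)) / Real.log 3)
      linarith
    have hu_eq : u = (3:ℝ) ^ (1 - α) := by
      rw [hudef, ← Real.rpow_neg_one (3:ℝ), ← Real.rpow_mul (by norm_num : (0:ℝ) ≤ 3)]
      norm_num
    have hu_lt : u < 2/(1-δ) := by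
      rw [hu_eq, Real.rpow_def_of_pos (by norm_num : (0:ℝ) < 3)]
      calc Real.exp (Real.log 3 * (1-α)) < Real.exp (Real.log (2/(1-δ))) := by
            apply Real.exp_lt_exp.mpr; linarith [hkey]
        _ = 2/(1-δ) := Real.exp_log h2d
    have : q < (2/(1-δ)) * r := mul_lt_mul_of_pos_right hu_lt hr0
    have heq : (2/(1-δ)) * r = 1 := by
      rw [hrdef]; field_simp
    linarith
  have hC0 : (0:ℝ) < 3 * u * (1 - q)⁻¹ := by
    have : (0:ℝ) < (1-q)⁻¹ := inv_pos.mpr (by linarith)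
    positivity
  refine ⟨3 * u * (1 - q)⁻¹, hC0, ?_⟩
  intro k j hj x hx
  set I := triSet k j with hI
  have hImeas : MeasurableSet I := measurableSet_Ico
  have hx0 : 0 ≤ x := by
    have h0 : (0:ℝ) ≤ (j:ℝ)/3^k := by positivity
    have h1 := hx.1
    linarith
  have hwidth : ((j:ℝ)+1)/3^k - (j:ℝ)/3^k = ((3:ℝ)^k)⁻¹ := by
    field_simp
    ring
  have habs : ∀ y ∈ I, |x - y| < ((3:ℝ)^k)⁻¹ := by
    intro y hy
    rw [abs_sub_lt_iff]
    obtain ⟨hy1, hy2⟩ := hy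
    obtain ⟨hx1, hx2⟩ := hx
    constructor <;> linarith
  set s : ℕ → Set ℝ := fun d => {y : ℝ | |x - y| < ((3:ℝ)^(k+d))⁻¹} with hsdef
  have hs : ∀ d, MeasurableSet (s d) := by
    intro d
    have : s d = Set.Ioo (x - ((3:ℝ)^(k+d))⁻¹) (x + ((3:ℝ)^(k+d))⁻¹) := by
      ext y
      simp only [hsdef, Set.mem_setOf_eq, Set.mem_Ioo, abs_sub_lt_iff]
      constructor <;> rintro ⟨h1, h2⟩ <;> constructor <;> linarith
    rw [this]
    exact measurableSet_Ioo
  set c : ℕ → ℝ≥0∞ := fun d => ENNReal.ofReal ((((3:ℝ)^(k+d+1))⁻¹) ^ (α-1)) with hcdef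
  set gk : ℝ := (((3:ℝ)^k)⁻¹) ^ (α-1) with hgkdef
  have hgd : ∀ d : ℕ, (((3:ℝ)^(k+d+1))⁻¹) ^ (α-1) = gk * (u * u^d) := by
    intro d
    have h1 : ((3:ℝ)^(k+d+1))⁻¹ = ((3:ℝ)⁻¹)^k * ((3:ℝ)⁻¹)^(d+1) := by
      rw [← pow_add, inv_pow, add_assoc]
    have h2 : gk = (((3:ℝ)⁻¹) ^ (α-1))^k := by
      rw [hgkdef, ← inv_pow, pow_rpow_comm _ (by norm_num)]
    rw [h1, Real.mul_rpow (by positivity) (by positivity),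
      pow_rpow_comm _ (by norm_num) k, pow_rpow_comm _ (by norm_num) (d+1)]
    rw [h2, hudef, pow_succ']
  clear_value r u q gk
  calc fracInt α (μ.restrict I) x
      ≤ ∫⁻ y, ∑' d : ℕ, (s d).indicator (fun _ => c d) y ∂(μ.restrict I) := by
        refine lintegral_mono_ae (((ae_restrict_mem hImeas)).mono fun y hy => ?_)
        exact pointwise_bound hα2 k x y (habs y hy)
    _ = ∑' d : ℕ, ∫⁻ y, (s d).indicator (fun _ => c d) y ∂(μ.restrict I) :=
        lintegral_tsum fun d => (measurable_const.indicator (hs d)).aemeasurable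
    _ = ∑' d : ℕ, c d * μ (I ∩ s d) := by
        refine tsum_congr fun d => ?_
        rw [lintegral_indicator_const (hs d), Measure.restrict_apply (hs d), Set.inter_comm]
    _ ≤ ∑' d : ℕ, c d * (ENNReal.ofReal (3 * r^d) * μ I) := by
        refine ENNReal.tsum_le_tsum fun d => ?_
        refine mul_le_mul_right ?_ _
        rw [hrdef]
        exact ball_mass hμ hδ0 hδ d k j hj x hx0
    _ = (∑' d : ℕ, ENNReal.ofReal ((3 * u * gk) * q^d)) * μ I := by
        rw [← ENNReal.tsum_mul_right]
        refine tsum_congr fun d => ?_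
        rw [← mul_assoc]
        simp only [hcdef]
        rw [← ENNReal.ofReal_mul (Real.rpow_nonneg (by positivity : (0:ℝ) ≤ ((3:ℝ)^(k+d+1))⁻¹) (α-1))]
        congr 1
        rw [hgd d, hqdef, mul_pow]
        ring
    _ ≤ ENNReal.ofReal ((3 * u * (1 - q)⁻¹) * gk) * μ I := by
        apply mul_le_mul_left
        rw [← ENNReal.ofReal_tsum_of_nonneg]
        · apply ENNReal.ofReal_le_ofReal
          rw [tsum_mul_left, tsum_geometric_of_lt_one hq0 hq1]
          apply le_of_eq
          ring
        · intro n
          have hgk0 : 0 ≤ gk := by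
            rw [hgkdef]; exact Real.rpow_nonneg (by positivity) _
          positivity
        · exact (summable_geometric_of_lt_one hq0 hq1).mul_left _
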